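/- Suppose that for every i ∈ {1,…,n} the number m_i := −2λ_i is a natural number belonging to {0, 1, …, k−1}, and let r = max_i m_i. Then the rank of the linear map T : ℝ^{{α∈ℕⁿ : |α|=k}} → ℝ^{{β∈ℕⁿ : |β|=k−1}}, (T D)_β = Σ_{i=1}^n (β_i + 1)(β_i + 2λ_i) D_{β^i}, satisfies N_{k−1} − C(n + k − r − 3, k − r − 1) ≤ rank(T) ≤ N_{k−1}; equivalently, the dimension of the cokernel of T is at most C(n + k − r − 3, k − r − 1). -/

import Mathlib

open scoped BigOperators

noncomputable section

/-- For `|β| = k − 1`, the multi-index `β^i` (the `i`-th entry increased by `1`) has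
`|β^i| = k`. -/
def upIdx (n k : ℕ) (hk : 1 ≤ k) (β : {β : Fin n → ℕ // ∑ i, β i = k - 1}) (i : Fin n) :
    {α : Fin n → ℕ // ∑ i, α i = k} :=
  ⟨Function.update β.1 i (β.1 i + 1), by
    have h1 : ∑ j, Function.update β.1 i (β.1 i + 1) j
        = (β.1 i + 1) + ∑ j ∈ Finset.univ.erase i, β.1 j := by
      rw [← Finset.add_sum_erase _ _ (Finset.mem_univ i), Function.update_self]
      congr 1
      exact Finset.sum_congr rfl fun j hj =>
        Function.update_of_ne (Finset.mem_erase.1 hj).1 _ _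
    have h2 : β.1 i + ∑ j ∈ Finset.univ.erase i, β.1 j = k - 1 := by
      rw [Finset.add_sum_erase _ _ (Finset.mem_univ i)]; exact β.2
    omega⟩

/-- The linear map `T : ℝ^{{|α|=k}} → ℝ^{{|β|=k−1}}`,
`(T D)_β = Σᵢ (βᵢ+1)(βᵢ+2λᵢ) D_{βⁱ}`. -/
def Tmap (n k : ℕ) (hk : 1 ≤ k) (lam : Fin n → ℝ) :
    ({α : Fin n → ℕ // ∑ i, α i = k} → ℝ) →ₗ[ℝ]
      ({β : Fin n → ℕ // ∑ i, β i = k - 1} → ℝ) where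
  toFun D := fun β => ∑ i, ((β.1 i : ℝ) + 1) * ((β.1 i : ℝ) + 2 * lam i)
    * D (upIdx n k hk β i)
  map_add' D E := by
    funext β
    simp only [Pi.add_apply, mul_add]
    rw [Finset.sum_add_distrib]
  map_smul' r D := by
    funext β
    simp only [Pi.smul_apply, smul_eq_mul, RingHom.id_apply]
    rw [Finset.mul_sum]
    exact Finset.sum_congr rfl fun i _ => by ring

instance fintypeSumEq (n s : ℕ) : Fintype {β : Fin n → ℕ // ∑ i, β i = s} :=
  Fintype.subtype (Finset.Nat.antidiagonalTuple n s) fun _ =>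
    Finset.Nat.mem_antidiagonalTuple

lemma card_sumEq_le (q s : ℕ) :
    Fintype.card {γ : Fin q → ℕ // ∑ j, γ j = s} ≤ (q + s - 1).choose s := by
  classical
  have hinj : Function.Injective (fun γ : {γ : Fin q → ℕ // ∑ j, γ j = s} =>
      (⟨∑ j, γ.1 j • ({j} : Multiset (Fin q)), by
        rw [Multiset.card_sum]; simp [Multiset.card_nsmul, γ.2]⟩ : Sym (Fin q) s)) := by
    intro γ₁ γ₂ h
    have h' : ∀ j, Multiset.count j (∑ j', γ₁.1 j' • ({j'} : Multiset (Fin q)))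
        = Multiset.count j (∑ j', γ₂.1 j' • ({j'} : Multiset (Fin q))) := by
      intro j
      have := congrArg Subtype.val h
      simp only at this
      rw [this]
    have hcount : ∀ (γ : Fin q → ℕ) (j : Fin q),
        Multiset.count j (∑ j', γ j' • ({j'} : Multiset (Fin q))) = γ j := by
      intro γ j
      rw [Multiset.count_sum']
      simp [Multiset.count_nsmul, Multiset.count_singleton]
    refine Subtype.ext (funext fun j => ?_)
    have := h' j
    rwa [hcount, hcount] at this
  calc Fintype.card {γ : Fin q → ℕ // ∑ j, γ j = s}
      ≤ Fintype.card (Sym (Fin q) s) := Fintype.card_le_of_injective _ hinj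
    _ = (q + s - 1).choose s := by rw [Sym.card_sym_eq_choose, Fintype.card_fin]

/-- rank estimate in Theorem 2.6: if every `mᵢ := −2λᵢ` is a natural
number in `{0,…,k−1}` and `r = maxᵢ mᵢ`, then
`N_{k−1} − C(n+k−r−3, k−r−1) ≤ rank T ≤ N_{k−1}`. -/
theorem Tmap_rank_bounds (n k : ℕ) (hn : 1 ≤ n) (hk : 1 ≤ k) (lam : Fin n → ℝ)
    (m : Fin n → ℕ) (hm : ∀ i, (m i : ℝ) = -(2 * lam i) ∧ m i < k)
    (r : ℕ) (hr : r = Finset.univ.sup m) :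
    Nat.card {β : Fin n → ℕ // ∑ i, β i = k - 1}
        - Nat.choose (n + k - r - 3) (k - r - 1)
      ≤ Module.finrank ℝ (LinearMap.range (Tmap n k hk lam)) ∧
    Module.finrank ℝ (LinearMap.range (Tmap n k hk lam))
      ≤ Nat.card {β : Fin n → ℕ // ∑ i, β i = k - 1} := by
  classical
  obtain ⟨n', rfl⟩ : ∃ n', n = n' + 1 := ⟨n - 1, by omega⟩
  set B := {β : Fin (n' + 1) → ℕ // ∑ i, β i = k - 1} with hB
  set T := Tmap (n' + 1) k hk lam with hT
  haveI : Nonempty (Fin (n' + 1)) := ⟨⟨0, by omega⟩⟩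
  obtain ⟨i0, -, hi0⟩ := Finset.exists_mem_eq_sup Finset.univ Finset.univ_nonempty m
  rw [← hr] at hi0
  have hrk : r < k := hi0 ▸ (hm i0).2
  have hlam : ∀ i, 2 * lam i = -(m i : ℝ) := fun i => by have := (hm i).1; linarith
  have hccard : Fintype.card {β : B // β.1 i0 = r} ≤ ((n' + 1) + k - r - 3).choose (k - r - 1) := by
    have hinj : Function.Injective (fun β : {β : B // β.1 i0 = r} =>
        (⟨fun j => β.1.1 (i0.succAbove j), by
          show ∑ j, β.1.1 (i0.succAbove j) = k - 1 - r
          have hsum := β.1.2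
          rw [Fin.sum_univ_succAbove β.1.1 i0] at hsum
          have hfix := β.2
          omega⟩ : {γ : Fin n' → ℕ // ∑ j, γ j = k - 1 - r})) := by
      intro β₁ β₂ h
      have h' : ∀ j, β₁.1.1 (i0.succAbove j) = β₂.1.1 (i0.succAbove j) :=
        fun j => congrFun (congrArg Subtype.val h) j
      refine Subtype.ext (Subtype.ext (funext fun i => ?_))
      rcases eq_or_ne i i0 with rfl | hne
      · rw [β₁.2, β₂.2]
      · obtain ⟨j, rfl⟩ := Fin.exists_succAbove_eq (Ne.symm (Ne.symm hne))
        exact h' j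
    calc Fintype.card {β : B // β.1 i0 = r}
        ≤ Fintype.card {γ : Fin n' → ℕ // ∑ j, γ j = k - 1 - r} :=
          Fintype.card_le_of_injective _ hinj
      _ ≤ (n' + (k - 1 - r) - 1).choose (k - 1 - r) := card_sumEq_le _ _
      _ = ((n' + 1) + k - r - 3).choose (k - r - 1) := by
          have e1 : n' + (k - 1 - r) - 1 = (n' + 1) + k - r - 3 := by omega
          have e2 : k - 1 - r = k - r - 1 := by omega
          rw [e1, e2]
  -- the "good" rows
  set S := {β : B // ¬ β.1 i0 = r} with hS
  set P : (B → ℝ) →ₗ[ℝ] (S → ℝ) := LinearMap.funLeft ℝ ℝ (fun s : S => s.1) with hP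
  -- bound on a single entry
  have hle : ∀ (β : B), β.1 i0 ≤ k - 1 := by
    intro β
    have h := Finset.single_le_sum (f := β.1) (fun i _ => Nat.zero_le _) (Finset.mem_univ i0)
    rwa [β.2] at h
  -- upIdx injectivity facts
  have hup : ∀ (β₁ β₂ : B) (i j : Fin (n' + 1)), upIdx (n' + 1) k hk β₁ i = upIdx (n' + 1) k hk β₂ j →
      (i = j → β₁ = β₂) ∧ (i ≠ j → β₁.1 j = β₂.1 j + 1 ∧ β₂.1 i = β₁.1 i + 1) := by
    intro β₁ β₂ i j h
    have hfun : Function.update β₁.1 i (β₁.1 i + 1) = Function.update β₂.1 j (β₂.1 j + 1) :=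
      congrArg Subtype.val h
    constructor
    · rintro rfl
      refine Subtype.ext (funext fun x => ?_)
      by_cases hx : x = i
      · subst hx
        have := congrFun hfun x
        rw [Function.update_self, Function.update_self] at this
        omega
      · have := congrFun hfun x
        rwa [Function.update_of_ne hx, Function.update_of_ne hx] at this
    · intro hij
      constructor
      · have := congrFun hfun j
        rwa [Function.update_of_ne (Ne.symm hij), Function.update_self] at this
      · have := congrFun hfun i
        rw [Function.update_self, Function.update_of_ne hij] at this
        omega
  -- key induction : all basis vectors are in the range of P ∘ T
  have key : ∀ (t : ℕ) (β : S), (k - 1) - β.1.1 i0 < t →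
      Pi.single β (1 : ℝ) ∈ LinearMap.range (P ∘ₗ T) := by
    intro t
    induction t with
    | zero => intro β h; omega
    | succ t ih =>
      intro β hβ
      set α := upIdx (n' + 1) k hk β.1 i0 with hα
      set D : ({α : Fin (n' + 1) → ℕ // ∑ i, α i = k} → ℝ) := Pi.single α 1 with hD
      set v : S → ℝ := (P ∘ₗ T) D with hv
      have hvmem : v ∈ LinearMap.range (P ∘ₗ T) := ⟨D, rfl⟩
      have hvβ' : ∀ β' : S, v β' = ∑ i, ((β'.1.1 i : ℝ) + 1) * ((β'.1.1 i : ℝ) + 2 * lam i)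
          * D (upIdx (n' + 1) k hk β'.1 i) := fun β' => rfl
      set c : ℝ := ((β.1.1 i0 : ℝ) + 1) * ((β.1.1 i0 : ℝ) - (r : ℝ)) with hc
      have hcne : c ≠ 0 := by
        have h1 : (β.1.1 i0 : ℝ) + 1 ≠ 0 := by positivity
        have h2 : (β.1.1 i0 : ℝ) - (r : ℝ) ≠ 0 := by
          have : (β.1.1 i0 : ℝ) ≠ (r : ℝ) := fun h => β.2 (Nat.cast_injective h)
          intro h; apply this; linarith
        exact mul_ne_zero h1 h2
      have hvb : v β = c := by
        rw [hvβ']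
        rw [Finset.sum_eq_single i0]
        · have : D (upIdx (n' + 1) k hk β.1 i0) = 1 := by
            rw [hD, ← hα, Pi.single_eq_same]
          rw [this, hlam i0, hc, ← hi0]; ring
        · intro i _ hi
          have : D (upIdx (n' + 1) k hk β.1 i) = 0 := by
            rw [hD]
            apply Pi.single_eq_of_ne
            intro hcon
            have := ((hup _ _ _ _ hcon).2 hi).2
            omega
          rw [this]; ring
        · intro h; exact absurd (Finset.mem_univ i0) h
      have hvother : ∀ β' : S, β' ≠ β → v β' ≠ 0 → β'.1.1 i0 = β.1.1 i0 + 1 := by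
        intro β' hne hv0
        rw [hvβ'] at hv0
        obtain ⟨i, -, hi⟩ := Finset.exists_ne_zero_of_sum_ne_zero hv0
        have hD1 : D (upIdx (n' + 1) k hk β'.1 i) ≠ 0 := fun h => hi (by rw [h]; ring)
        have heq : upIdx (n' + 1) k hk β'.1 i = α := by
          by_contra hcon
          exact hD1 (Pi.single_eq_of_ne hcon 1)
        rcases eq_or_ne i i0 with h | h
        · subst h
          have : β'.1 = β.1 := (hup _ _ _ _ heq).1 rfl
          exact absurd (Subtype.ext this) hne
        · exact ((hup _ _ _ _ heq).2 h).1
      -- express single β 1 via v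
      have hrep : Pi.single β (1 : ℝ) =
          c⁻¹ • (v - ∑ β' ∈ Finset.univ.erase β, Pi.single β' (v β')) := by
        funext x
        have hxsum : (∑ β' ∈ Finset.univ.erase β, Pi.single β' (v β')) x
            = if x = β then 0 else v x := by
          rw [Finset.sum_apply]
          rcases eq_or_ne x β with rfl | hx
          · rw [if_pos rfl]
            exact Finset.sum_eq_zero fun β' hβ' =>
              Pi.single_eq_of_ne (M := fun _ : S => ℝ) (Ne.symm (Finset.mem_erase.1 hβ').1) _
          · rw [if_neg hx, Finset.sum_eq_single x]
            · exact Pi.single_eq_same (M := fun _ : S => ℝ) x (v x)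
            · intro b _ hb
              exact Pi.single_eq_of_ne (M := fun _ : S => ℝ) (Ne.symm hb) _
            · intro hmem
              exact absurd (Finset.mem_erase.2 ⟨hx, Finset.mem_univ x⟩) hmem
        simp only [Pi.smul_apply, Pi.sub_apply, smul_eq_mul, hxsum]
        rcases eq_or_ne x β with rfl | hx
        · rw [Pi.single_eq_same, if_pos rfl, hvb, sub_zero, inv_mul_cancel₀ hcne]
        · rw [Pi.single_eq_of_ne hx, if_neg hx, sub_self, mul_zero]
      rw [hrep]
      apply Submodule.smul_mem
      apply Submodule.sub_mem _ hvmem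
      apply Submodule.sum_mem
      intro β' hβ'
      rcases eq_or_ne (v β') 0 with h0 | h0
      · rw [h0, Pi.single_zero]; exact Submodule.zero_mem _
      · have hβ'ne : β' ≠ β := (Finset.mem_erase.1 hβ').1
        have hstep := hvother β' hβ'ne h0
        have hle' : β'.1.1 i0 ≤ k - 1 := hle β'.1
        have : Pi.single β' (v β') = (v β') • (Pi.single β' (1 : ℝ) : S → ℝ) := by
          rw [← Pi.single_smul', smul_eq_mul, mul_one]
        rw [this]
        exact Submodule.smul_mem _ _ (ih β' (by omega))
  -- surjectivity of P ∘ T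
  have hrange : LinearMap.range (P ∘ₗ T) = ⊤ := by
    rw [Submodule.eq_top_iff']
    intro v
    have hv_expand : v = ∑ β : S, Pi.single β (v β) := (Finset.univ_sum_single v).symm
    rw [hv_expand]
    apply Submodule.sum_mem
    intro β _
    have : Pi.single β (v β) = (v β) • (Pi.single β (1 : ℝ) : S → ℝ) := by
      rw [← Pi.single_smul', smul_eq_mul, mul_one]
    rw [this]
    refine Submodule.smul_mem _ _ (key k β ?_)
    have := hle β.1
    omega
  -- rank bounds
  haveI : Module.Finite ℝ (LinearMap.range T) := inferInstance
  have hlow : Fintype.card S ≤ Module.finrank ℝ (LinearMap.range T) := by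
    calc Fintype.card S = Module.finrank ℝ (S → ℝ) :=
          (Module.finrank_fintype_fun_eq_card ℝ).symm
      _ = Module.finrank ℝ (⊤ : Submodule ℝ (S → ℝ)) := (finrank_top ℝ _).symm
      _ = Module.finrank ℝ (Submodule.map P (LinearMap.range T)) := by
          rw [← LinearMap.range_comp, hrange]
      _ ≤ Module.finrank ℝ (LinearMap.range T) := Submodule.finrank_map_le _ _
  have hhigh : Module.finrank ℝ (LinearMap.range T) ≤ Fintype.card B := by
    calc Module.finrank ℝ (LinearMap.range T) ≤ Module.finrank ℝ (B → ℝ) :=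
          Submodule.finrank_le _
      _ = Fintype.card B := Module.finrank_fintype_fun_eq_card ℝ
  -- cardinalities
  have hcompl : Fintype.card S = Fintype.card B - Fintype.card {β : B // β.1 i0 = r} :=
    Fintype.card_subtype_compl _
  have hNB : Nat.card B = Fintype.card B := Nat.card_eq_fintype_card
  refine ⟨?_, ?_⟩
  · rw [hNB]
    calc Fintype.card B - ((n' + 1) + k - r - 3).choose (k - r - 1)
        ≤ Fintype.card B - Fintype.card {β : B // β.1 i0 = r} :=
          Nat.sub_le_sub_left hccard _
      _ = Fintype.card S := hcompl.symm
      _ ≤ Module.finrank ℝ (LinearMap.range T) := hlow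
  · rw [hNB]; exact hhigh
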